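/- Let T₁ = (S₁,Σ₁,κ₁) and T₂ = (S₂,Σ₂,κ₂) be STSs, α : S₁ → S₂ measurable, and μ a probability measure on S₁. If T₂ is a μ-sound α-abstraction of T₁, then for every B ∈ Σ₂: if T₂ is decisive w.r.t. B from α_# μ (i.e. Prob^{T₂}_{α_# μ}(F B ∪ F B̃) = 1, where B̃ is the avoid-set of B in T₂), then T₁ is decisive w.r.t. α⁻¹(B) from μ. -/

import Mathlib

open MeasureTheory ProbabilityTheory ENNReal Filter Topology

namespace STS

variable {S : Type*} [MeasurableSpace S]

/-- Probability of the cylinder `Cyl(A 0, …, A n)` for the Markov chain with kernel `κ`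
and initial distribution `μ`. -/
noncomputable def cylProb (κ : Kernel S S) : ℕ → Measure S → (ℕ → Set S) → ℝ≥0∞
  | 0, μ, A => μ (A 0)
  | n + 1, μ, A => ∫⁻ s in A 0, cylProb κ n (κ s) (fun i => A (i + 1)) ∂μ

/-- `P` assigns to each initial (probability) distribution the path measure (on `ℕ → S`,
with the product σ-algebra) of the time-homogeneous Markov chain with transition kernel `κ`,
as given by the Ionescu–Tulcea construction: it is the unique probability measure giving
cylinders their prescribed probabilities. -/
def IsPathMeasure (κ : Kernel S S) (P : Measure S → Measure (ℕ → S)) : Prop :=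
  ∀ μ : Measure S, IsProbabilityMeasure μ →
    IsProbabilityMeasure (P μ) ∧
    ∀ (n : ℕ) (A : ℕ → Set S), (∀ i, MeasurableSet (A i)) →
      P μ {ρ | ∀ i ≤ n, ρ i ∈ A i} = cylProb κ n μ A

/-- The path event `F B`: eventually reach `B`. -/
def evF (B : Set S) : Set (ℕ → S) := {ρ | ∃ k, ρ k ∈ B}

/-- The path event `F≤n B`. -/
def evFle (n : ℕ) (B : Set S) : Set (ℕ → S) := {ρ | ∃ k ≤ n, ρ k ∈ B}

/-- The path event `F≥p B`. -/
def evFge (p : ℕ) (B : Set S) : Set (ℕ → S) := {ρ | ∃ k, p ≤ k ∧ ρ k ∈ B}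

/-- The path event `GF B`: visit `B` infinitely often. -/
def evGF (B : Set S) : Set (ℕ → S) := {ρ | ∀ n, ∃ k, n ≤ k ∧ ρ k ∈ B}

/-- The path event `FG B`: eventually stay in `B` forever. -/
def evFG (B : Set S) : Set (ℕ → S) := {ρ | ∃ n, ∀ k, n ≤ k → ρ k ∈ B}

/-- The until event `B' U B`. -/
def evU (B' B : Set S) : Set (ℕ → S) := {ρ | ∃ k, ρ k ∈ B ∧ ∀ j < k, ρ j ∈ B'}

/-- The bounded until event `B' U≤n B`. -/
def evUle (n : ℕ) (B' B : Set S) : Set (ℕ → S) := {ρ | ∃ k ≤ n, ρ k ∈ B ∧ ∀ j < k, ρ j ∈ B'}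

/-- The avoid-set `B̃` of `B`: states from which `B` is reached with probability `0`. -/
def avoid (P : Measure S → Measure (ℕ → S)) (B : Set S) : Set S :=
  {s | P (Measure.dirac s) (evF B) = 0}

/-- `T` is decisive w.r.t. `B` from `μ`. -/
def Decisive (P : Measure S → Measure (ℕ → S)) (μ : Measure S) (B : Set S) : Prop :=
  P μ (evF B ∪ evF (avoid P B)) = 1

/-- `T` is strongly decisive w.r.t. `B` from `μ`. -/
def StronglyDecisive (P : Measure S → Measure (ℕ → S)) (μ : Measure S) (B : Set S) : Prop :=
  P μ (evGF B ∪ evF (avoid P B)) = 1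

/-- `T` is persistently decisive w.r.t. `B` from `μ`. -/
def PersistentlyDecisive (P : Measure S → Measure (ℕ → S)) (μ : Measure S) (B : Set S) : Prop :=
  ∀ p : ℕ, P μ (evFge p B ∪ evFge p (avoid P B)) = 1

/-- `PreProb(B)`: measurable sets `B'` from which `B` is reached in one step with positive
probability, whatever the initial distribution concentrated on `B'`. -/
def PreProb (P : Measure S → Measure (ℕ → S)) (B : Set S) : Set (Set S) :=
  {B' | MeasurableSet B' ∧ ∀ μ' : Measure S, IsProbabilityMeasure μ' → μ' B' = 1 →
    0 < P μ' {ρ | ρ 0 ∈ B' ∧ ρ 1 ∈ B}}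

/-- `T` is fair w.r.t. `B` from `μ`. -/
def Fair (P : Measure S → Measure (ℕ → S)) (μ : Measure S) (B : Set S) : Prop :=
  ∀ B' ∈ PreProb P B, 0 < P μ (evGF B') →
    P μ (evGF B ∩ evGF B') = P μ (evGF B')

/-- The one-step measure transformer `Ω_T`. -/
noncomputable def Omega (κ : Kernel S S) (μ : Measure S) : Measure S :=
  μ.bind (fun s => κ s)

/-- Two measures are qualitatively equivalent if they have the same null (measurable) sets. -/
def QualEquiv {T : Type*} [MeasurableSpace T] (μ ν : Measure T) : Prop :=
  ∀ A : Set T, MeasurableSet A → (μ A = 0 ↔ ν A = 0)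

/-- `T₂ = (S₂,κ₂)` is an `α`-abstraction of `T₁ = (S₁,κ₁)`. -/
def IsAbstraction {S₁ S₂ : Type*} [MeasurableSpace S₁] [MeasurableSpace S₂]
    (κ₁ : Kernel S₁ S₁) (κ₂ : Kernel S₂ S₂) (α : S₁ → S₂) : Prop :=
  ∀ μ : Measure S₁, IsProbabilityMeasure μ →
    QualEquiv (Measure.map α (Omega κ₁ μ)) (Omega κ₂ (Measure.map α μ))


/-! ### Auxiliary lemmas -/

section Aux

variable (κ : Kernel S S) [IsMarkovKernel κ]

/-- Measurability of `s ↦ cylProb κ n (κ s) A`. -/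
lemma measurable_cylProb_kernel (n : ℕ) (A : ℕ → Set S) (hA : ∀ i, MeasurableSet (A i)) :
    Measurable fun s => cylProb κ n (κ s) A := by
  induction n generalizing A with
  | zero => exact κ.measurable_coe (hA 0)
  | succ n ih =>
    have hg : Measurable fun t => cylProb κ n (κ t) (fun i => A (i + 1)) :=
      ih _ (fun i => hA (i + 1))
    have heq : ∀ s : S, cylProb κ (n + 1) (κ s) A
        = ∫⁻ t, (A 0).indicator (fun t => cylProb κ n (κ t) (fun i => A (i + 1))) t ∂κ s := by
      intro s
      rw [lintegral_indicator (hA 0)]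
      rfl
    simp only [heq]
    exact Measurable.lintegral_kernel (hg.indicator (hA 0))

/-- Cylinder probabilities starting from `μ.bind κ`. -/
lemma cylProb_bind (n : ℕ) (μ : Measure S) (A : ℕ → Set S) (hA : ∀ i, MeasurableSet (A i)) :
    cylProb κ n (μ.bind (fun s => κ s)) A = ∫⁻ s, cylProb κ n (κ s) A ∂μ := by
  cases n with
  | zero => exact Measure.bind_apply (hA 0) κ.measurable.aemeasurable
  | succ n =>
    have hg : Measurable fun t => cylProb κ n (κ t) (fun i => A (i + 1)) :=
      measurable_cylProb_kernel κ n _ (fun i => hA (i + 1))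
    calc cylProb κ (n + 1) (μ.bind (fun s => κ s)) A
        = ∫⁻ t, (A 0).indicator (fun t => cylProb κ n (κ t) (fun i => A (i + 1))) t
            ∂(μ.bind (fun s => κ s)) := by
          rw [lintegral_indicator (hA 0)]; rfl
      _ = ∫⁻ s, ∫⁻ t, (A 0).indicator (fun t => cylProb κ n (κ t) (fun i => A (i + 1))) t
            ∂κ s ∂μ := Measure.lintegral_bind κ.measurable.aemeasurable (hg.indicator (hA 0)).aemeasurable
      _ = ∫⁻ s, cylProb κ (n + 1) (κ s) A ∂μ := by
          refine lintegral_congr fun s => ?_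
          rw [lintegral_indicator (hA 0)]
          rfl

/-- Iterated one-step transformer as a kernel power. -/
noncomputable def kpow (κ : Kernel S S) : ℕ → Kernel S S
  | 0 => Kernel.id
  | k + 1 => (kpow κ k) ∘ₖ κ

lemma Omega_iterate (k : ℕ) (ν : Measure S) :
    (Omega κ)^[k] ν = ν.bind (fun s => kpow κ k s) := by
  induction k generalizing ν with
  | zero =>
    have : (fun s : S => kpow κ 0 s) = Measure.dirac := by
      funext s; simp [kpow, Kernel.id_apply]
    rw [this, Measure.bind_dirac]
    rfl
  | succ k ih =>
    rw [Function.iterate_succ_apply, ih (Omega κ ν), Omega,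
      Measure.bind_bind κ.measurable.aemeasurable (kpow κ k).measurable.aemeasurable]
    congr 1

lemma Omega_iterate_dirac (k : ℕ) (t : S) :
    (Omega κ)^[k] (Measure.dirac t) = kpow κ k t := by
  rw [Omega_iterate, Measure.dirac_bind (kpow κ k).measurable]

instance isProbabilityMeasure_Omega (μ : Measure S) [IsProbabilityMeasure μ] :
    IsProbabilityMeasure (Omega κ μ) := by
  constructor
  rw [Omega, Measure.bind_apply MeasurableSet.univ κ.measurable.aemeasurable]
  simp

lemma isProbabilityMeasure_Omega_iterate (k : ℕ) (μ : Measure S) [IsProbabilityMeasure μ] :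
    IsProbabilityMeasure ((Omega κ)^[k] μ) := by
  induction k generalizing μ with
  | zero => exact ‹_›
  | succ k ih =>
    rw [Function.iterate_succ_apply]
    exact ih (Omega κ μ)

/-- The cylinder that pins down only the `n`-th coordinate gives the `n`-th marginal. -/
lemma cylProb_marginal (n : ℕ) (μ : Measure S) {C : Set S} (hC : MeasurableSet C) :
    cylProb κ n μ (fun i => if i = n then C else Set.univ) = (Omega κ)^[n] μ C := by
  induction n generalizing μ with
  | zero => simp [cylProb]
  | succ n ih =>
    have hA' : (fun i => (fun j => if j = n + 1 then C else Set.univ) (i + 1))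
        = fun i => if i = n then C else Set.univ := by
      funext i
      simp [Nat.succ_inj]
    have hA'm : ∀ i, MeasurableSet ((fun i => if i = n then C else Set.univ) i) := by
      intro i; by_cases hi : i = n <;> simp [hi, hC]
    calc cylProb κ (n + 1) μ (fun i => if i = n + 1 then C else Set.univ)
        = ∫⁻ s in (if (0 : ℕ) = n + 1 then C else Set.univ),
            cylProb κ n (κ s) (fun i => if i = n then C else Set.univ) ∂μ := by
          rw [show cylProb κ (n + 1) μ (fun i => if i = n + 1 then C else Set.univ)
              = ∫⁻ s in (if (0 : ℕ) = n + 1 then C else Set.univ),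
                cylProb κ n (κ s)
                  (fun i => (fun j => if j = n + 1 then C else Set.univ) (i + 1)) ∂μ from rfl,
            hA']
      _ = ∫⁻ s, cylProb κ n (κ s) (fun i => if i = n then C else Set.univ) ∂μ := by
          rw [if_neg (Nat.succ_ne_zero n).symm, Measure.restrict_univ]
      _ = cylProb κ n (μ.bind (fun s => κ s)) (fun i => if i = n then C else Set.univ) :=
          (cylProb_bind κ n μ _ hA'm).symm
      _ = (Omega κ)^[n] (Omega κ μ) C := ih (Omega κ μ)
      _ = (Omega κ)^[n + 1] μ C := by rw [Function.iterate_succ_apply]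

/-- Characterisation of never reaching `C`: all marginals give `C` measure zero. -/
lemma pathMeasure_evF_eq_zero_iff {P : Measure S → Measure (ℕ → S)}
    (hP : IsPathMeasure κ P) (μ : Measure S) [IsProbabilityMeasure μ]
    {C : Set S} (hC : MeasurableSet C) :
    P μ (evF C) = 0 ↔ ∀ k : ℕ, (Omega κ)^[k] μ C = 0 := by
  have hcov : evF C = ⋃ n : ℕ, {ρ : ℕ → S | ρ n ∈ C} := by
    ext ρ
    simp [evF, Set.mem_iUnion]
  have hcyl : ∀ n : ℕ, {ρ : ℕ → S | ρ n ∈ C}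
      = {ρ : ℕ → S | ∀ i ≤ n, ρ i ∈ (fun j => if j = n then C else Set.univ) i} := by
    intro n
    ext ρ
    constructor
    · intro h i _
      by_cases hi : i = n
      · subst hi; simpa using h
      · simp [hi]
    · intro h
      have := h n le_rfl
      simpa using this
  have hval : ∀ n : ℕ, P μ {ρ : ℕ → S | ρ n ∈ C} = (Omega κ)^[n] μ C := by
    intro n
    rw [hcyl n, (hP μ ‹_›).2 n _ (fun i => by by_cases hi : i = n <;> simp [hi, hC]),
      cylProb_marginal κ n μ hC]
  rw [hcov, measure_iUnion_null_iff]
  exact forall_congr' fun n => by rw [hval n]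

/-- One-step transformers preserve qualitative equivalence. -/
lemma qualEquiv_Omega {ν ν' : Measure S} (h : QualEquiv ν ν') :
    QualEquiv (Omega κ ν) (Omega κ ν') := by
  intro A hA
  have hmeas : MeasurableSet {s : S | κ s A ≠ 0} :=
    (κ.measurable_coe hA (measurableSet_singleton 0)).compl
  have key : ∀ ρ : Measure S, Omega κ ρ A = 0 ↔ ρ {s | κ s A ≠ 0} = 0 := by
    intro ρ
    rw [Omega, Measure.bind_apply hA κ.measurable.aemeasurable,
      lintegral_eq_zero_iff (κ.measurable_coe hA)]
    constructor
    · intro hae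
      have : {s : S | ¬ κ s A = 0} ⊆ {s | ¬ (fun s => κ s A) s = (0 : S → ℝ≥0∞) s} := by
        intro s hs; exact hs
      exact measure_mono_null this hae
    · intro h0
      filter_upwards [measure_eq_zero_iff_ae_notMem.mp h0] with s hs
      simpa using hs
  rw [key ν, key ν', h _ hmeas]

end Aux

/-- Qualitative commutation of iterated transformers with the abstraction map. -/
lemma qualEquiv_iterate {S₁ S₂ : Type*} [MeasurableSpace S₁] [MeasurableSpace S₂]
    {κ₁ : Kernel S₁ S₁} [IsMarkovKernel κ₁] {κ₂ : Kernel S₂ S₂} [IsMarkovKernel κ₂]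
    {α : S₁ → S₂} (hα : Measurable α) (habs : IsAbstraction κ₁ κ₂ α)
    (μ : Measure S₁) [IsProbabilityMeasure μ] (k : ℕ) :
    QualEquiv (Measure.map α ((Omega κ₁)^[k] μ)) ((Omega κ₂)^[k] (Measure.map α μ)) := by
  induction k with
  | zero => intro A _; exact Iff.rfl
  | succ k ih =>
    rw [Function.iterate_succ_apply', Function.iterate_succ_apply']
    intro A hA
    have hiter : IsProbabilityMeasure ((Omega κ₁)^[k] μ) :=
      isProbabilityMeasure_Omega_iterate κ₁ k μ
    have h1 := habs ((Omega κ₁)^[k] μ) hiter A hA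
    have h2 := qualEquiv_Omega κ₂ ih A hA
    exact h1.trans h2

/-- through a `μ`-sound `α`-abstraction, decisiveness of `T₂` w.r.t. `B`
from `α_# μ` transfers to decisiveness of `T₁` w.r.t. `α⁻¹(B)` from `μ`. -/
theorem statement_9 {S₁ S₂ : Type*} [MeasurableSpace S₁] [MeasurableSpace S₂]
    (κ₁ : Kernel S₁ S₁) [IsMarkovKernel κ₁] (κ₂ : Kernel S₂ S₂) [IsMarkovKernel κ₂]
    (P₁ : Measure S₁ → Measure (ℕ → S₁)) (hP₁ : IsPathMeasure κ₁ P₁)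
    (P₂ : Measure S₂ → Measure (ℕ → S₂)) (hP₂ : IsPathMeasure κ₂ P₂)
    (α : S₁ → S₂) (hα : Measurable α) (habs : IsAbstraction κ₁ κ₂ α)
    (μ : Measure S₁) (hμ : IsProbabilityMeasure μ)
    (hsound : ∀ B : Set S₂, MeasurableSet B →
      P₂ (μ.map α) (evF B) = 1 → P₁ μ (evF (α ⁻¹' B)) = 1) :
    ∀ B : Set S₂, MeasurableSet B →
      Decisive P₂ (μ.map α) B → Decisive P₁ μ (α ⁻¹' B) := by
  intro B hB hdec
  have hmap : IsProbabilityMeasure (μ.map α) := Measure.isProbabilityMeasure_map hα.aemeasurable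
  -- the avoid set of `B` in `T₂`, and its measurability
  set Bt : Set S₂ := avoid P₂ B with hBt
  have havoid_char : ∀ t : S₂, t ∈ Bt ↔ ∀ k : ℕ, kpow κ₂ k t B = 0 := by
    intro t
    have : P₂ (Measure.dirac t) (evF B) = 0 ↔ ∀ k : ℕ, (Omega κ₂)^[k] (Measure.dirac t) B = 0 :=
      pathMeasure_evF_eq_zero_iff κ₂ hP₂ (Measure.dirac t) hB
    simpa [hBt, avoid, Omega_iterate_dirac] using this
  have hBtm : MeasurableSet Bt := by
    have : Bt = ⋂ k : ℕ, (fun t => kpow κ₂ k t B) ⁻¹' {0} := by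
      ext t
      simp [havoid_char t, Set.mem_iInter]
    rw [this]
    exact MeasurableSet.iInter fun k =>
      ((kpow κ₂ k).measurable_coe hB) (measurableSet_singleton 0)
  -- step 1: decisiveness rewritten as reaching `B ∪ Bt` a.s.
  have hone : P₂ (μ.map α) (evF (B ∪ Bt)) = 1 := by
    have : evF (B ∪ Bt) = evF B ∪ evF Bt := by
      ext ρ
      simp [evF, exists_or]
    rw [this]
    exact hdec
  -- step 2: soundness transfers it to `T₁`
  have hone₁ : P₁ μ (evF (α ⁻¹' (B ∪ Bt))) = 1 := hsound _ (hB.union hBtm) hone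
  -- step 3: `α ⁻¹' Bt ⊆ avoid P₁ (α ⁻¹' B)`
  have hsub : α ⁻¹' Bt ⊆ avoid P₁ (α ⁻¹' B) := by
    intro s hs
    have hchar := (havoid_char (α s)).mp hs
    have hzero : ∀ k : ℕ, (Omega κ₁)^[k] (Measure.dirac s) (α ⁻¹' B) = 0 := by
      intro k
      have hq := qualEquiv_iterate hα habs (Measure.dirac s) k B hB
      have hm : Measure.map α ((Omega κ₁)^[k] (Measure.dirac s)) B
          = (Omega κ₁)^[k] (Measure.dirac s) (α ⁻¹' B) := Measure.map_apply hα hB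
      have h2 : (Omega κ₂)^[k] (Measure.map α (Measure.dirac s)) B = 0 := by
        rw [Measure.map_dirac' hα, Omega_iterate_dirac]
        exact hchar k
      rw [← hm]
      exact hq.mpr h2
    exact (pathMeasure_evF_eq_zero_iff κ₁ hP₁ (Measure.dirac s) (hα hB)).mpr hzero
  -- step 4: conclude
  have hsubset : evF (α ⁻¹' (B ∪ Bt)) ⊆ evF (α ⁻¹' B) ∪ evF (avoid P₁ (α ⁻¹' B)) := by
    intro ρ hρ
    obtain ⟨k, hk⟩ := hρ
    rcases hk with h | h
    · exact Or.inl ⟨k, h⟩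
    · exact Or.inr ⟨k, hsub h⟩
  have hprob : IsProbabilityMeasure (P₁ μ) := (hP₁ μ hμ).1
  refine le_antisymm prob_le_one ?_
  calc (1 : ℝ≥0∞) = P₁ μ (evF (α ⁻¹' (B ∪ Bt))) := hone₁.symm
    _ ≤ P₁ μ (evF (α ⁻¹' B) ∪ evF (avoid P₁ (α ⁻¹' B))) := measure_mono hsubset

end STS
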